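/- arXiv:2009.03174 — 4 statements merged into one kernel-verified Lean document; each statement's English description precedes it below -/
import Mathlib

section
/- For all a, b ∈ ZMod (p² − 1), the following are equivalent: (i) either (p·a = −a and p·b = −b) or (p·a = −b and p·b = −a); (ii) either (there exist a', b' ∈ ZMod (p² − 1) with a = (1 − p)·a' and b = (1 − p)·b') or b = −p·a. -/
lemma pp_eq_one (p : ℕ) (hp : p.Prime) :
    ((p : ZMod (p ^ 2 - 1)) * p) = 1 := by
  have h1 : 1 ≤ p ^ 2 := Nat.one_le_pow _ _ hp.pos
  have h0 : ((p ^ 2 - 1 : ℕ) : ZMod (p ^ 2 - 1)) = 0 := ZMod.natCast_self _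
  have : ((p ^ 2 : ℕ) : ZMod (p ^ 2 - 1)) = 1 := by
    rw [← Nat.sub_add_cancel h1]; push_cast [h0]; ring
  calc (p : ZMod (p ^ 2 - 1)) * p = ((p ^ 2 : ℕ) : ZMod (p ^ 2 - 1)) := by push_cast; ring
    _ = 1 := this

lemma key (p : ℕ) (hp : p.Prime) (x : ZMod (p ^ 2 - 1)) :
    (p : ZMod (p ^ 2 - 1)) * x = -x ↔ ∃ y, x = (1 - (p : ZMod (p ^ 2 - 1))) * y := by
  have hp1 : 1 ≤ p := hp.one_lt.le
  have h4p : 4 ≤ p ^ 2 := by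
    have := Nat.pow_le_pow_left hp.two_le 2; omega
  haveI : NeZero (p ^ 2 - 1) := ⟨by omega⟩
  have hn : p ^ 2 - 1 = (p + 1) * (p - 1) := by
    have := Nat.sq_sub_sq p 1
    simpa [pow_two] using this
  have hcast : ((p - 1 : ℕ) : ZMod (p ^ 2 - 1)) = (p : ZMod (p ^ 2 - 1)) - 1 := by
    push_cast [Nat.cast_sub hp1]; ring
  constructor
  · intro h
    have h2 : ((p + 1 : ℕ) : ZMod (p ^ 2 - 1)) * x = 0 := by push_cast; rw [add_mul, h]; ring
    have h3 : (((p + 1) * x.val : ℕ) : ZMod (p ^ 2 - 1)) = 0 := by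
      push_cast
      rw [ZMod.natCast_val, ZMod.cast_id]
      push_cast at h2; exact h2
    have h4 : (p ^ 2 - 1) ∣ (p + 1) * x.val := (ZMod.natCast_eq_zero_iff _ _).mp h3
    have h4' : (p + 1) * (p - 1) ∣ (p + 1) * x.val := by rw [← hn]; exact h4
    have h5 : (p - 1) ∣ x.val :=
      (mul_dvd_mul_iff_left (a := p + 1) (by omega)).mp h4'
    obtain ⟨m, hm⟩ := h5
    refine ⟨-(m : ZMod (p ^ 2 - 1)), ?_⟩
    have hx : (((p - 1) * m : ℕ) : ZMod (p ^ 2 - 1)) = x := by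
      rw [← hm, ZMod.natCast_val, ZMod.cast_id]
    rw [← hx]; push_cast [hcast]; ring
  · rintro ⟨y, rfl⟩
    have hpp := pp_eq_one p hp
    linear_combination (-y) * hpp

/-- Let `p` be a prime and work in `ZMod (p² − 1)`.  For all
`a, b : ZMod (p² − 1)`, the following are equivalent:
(i) either (`p·a = −a` and `p·b = −b`) or (`p·a = −b` and `p·b = −a`);
(ii) either there exist `a', b'` with `a = (1 − p)·a'` and `b = (1 − p)·b'`, or `b = −p·a`.
(This encodes the classification of Frobenius-twist self-dual principal series inertial
types.) -/
theorem frobenius_twist_self_dual_classification (p : ℕ) (hp : p.Prime)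
    (a b : ZMod (p ^ 2 - 1)) :
    ((((p : ZMod (p ^ 2 - 1)) * a = -a) ∧ ((p : ZMod (p ^ 2 - 1)) * b = -b)) ∨
      (((p : ZMod (p ^ 2 - 1)) * a = -b) ∧ ((p : ZMod (p ^ 2 - 1)) * b = -a))) ↔
    ((∃ a' b' : ZMod (p ^ 2 - 1),
        a = (1 - (p : ZMod (p ^ 2 - 1))) * a' ∧ b = (1 - (p : ZMod (p ^ 2 - 1))) * b') ∨
      b = -((p : ZMod (p ^ 2 - 1)) * a)) := by
  have hpp := pp_eq_one p hp
  constructor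
  · rintro (⟨ha, hb⟩ | ⟨ha, hb⟩)
    · left
      obtain ⟨a', ha'⟩ := (key p hp a).mp ha
      obtain ⟨b', hb'⟩ := (key p hp b).mp hb
      exact ⟨a', b', ha', hb'⟩
    · right; linear_combination ha
  · rintro (⟨a', b', rfl, rfl⟩ | rfl)
    · exact Or.inl ⟨(key p hp _).mpr ⟨a', rfl⟩, (key p hp _).mpr ⟨b', rfl⟩⟩
    · right
      exact ⟨(neg_neg _).symm, by linear_combination (-a) * hpp⟩
end

section
/- Let p be a prime and let r, a, b be integers. If p + r ≡ a(1 − p) (mod p² − 1) and −p·r ≡ b(1 − p) + p (mod p² − 1), then (p + 1) divides (a − b + 1). -/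
/-- Let `p` be a prime and `r, a, b` integers.  If
`p + r ≡ a(1 − p) (mod p² − 1)` and `−p·r ≡ b(1 − p) + p (mod p² − 1)`, then
`p + 1` divides `a − b + 1`.  (Case 1 in the proof that an `n`-generic
non-supercuspidal `C`-parameter has trivial Weyl element.) -/
theorem case_one_divisibility (p : ℕ) (hp : p.Prime) (r a b : ℤ)
    (h1 : (p : ℤ) + r ≡ a * (1 - (p : ℤ)) [ZMOD (p : ℤ) ^ 2 - 1])
    (h2 : -((p : ℤ) * r) ≡ b * (1 - (p : ℤ)) + p [ZMOD (p : ℤ) ^ 2 - 1]) :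
    ((p : ℤ) + 1) ∣ (a - b + 1) := by
  have h := ((h1.mul_left (p : ℤ)).add h2).dvd
  obtain ⟨k, hk⟩ := h
  have hp1 : (1 - (p : ℤ)) ≠ 0 := by
    have := hp.two_le
    omega
  have key : (1 - (p : ℤ)) * (-((p : ℤ) + 1)) ∣ (1 - (p : ℤ)) * ((p : ℤ) * a + b + p) := by
    exact ⟨k, by ring_nf; ring_nf at hk; linarith⟩
  rw [mul_dvd_mul_iff_left hp1] at key
  have key2 : ((p : ℤ) + 1) ∣ ((p : ℤ) * a + b + p) := neg_dvd.mp key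
  have : a - b + 1 = ((p : ℤ) + 1) * (a + 1) - ((p : ℤ) * a + b + p) := by ring
  rw [this]
  exact dvd_sub ⟨a + 1, rfl⟩ key2
end

section
/- Let p be a prime and let r, a, b be integers. If −p·r ≡ a + 1 − p·a (mod p² − 1) and p + 1 + r ≡ b + p(1 − b) (mod p² − 1), then (p + 1) divides a + p·b + 1, and consequently (p + 1) also divides a − b + 1. -/
/-- Let `p` be a prime and `r, a, b` integers.  If
`−p·r ≡ a + 1 − p·a (mod p² − 1)` and `p + 1 + r ≡ b + p(1 − b) (mod p² − 1)`, then
`p + 1` divides `a + p·b + 1`, and consequently `p + 1` also divides `a − b + 1`.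
(Case 2 in the proof that an `n`-generic non-supercuspidal `C`-parameter has trivial
Weyl element.) -/
theorem case_two_divisibility (p : ℕ) (hp : p.Prime) (r a b : ℤ)
    (h1 : -((p : ℤ) * r) ≡ a + 1 - (p : ℤ) * a [ZMOD (p : ℤ) ^ 2 - 1])
    (h2 : (p : ℤ) + 1 + r ≡ b + (p : ℤ) * (1 - b) [ZMOD (p : ℤ) ^ 2 - 1]) :
    ((p : ℤ) + 1) ∣ (a + (p : ℤ) * b + 1) ∧ ((p : ℤ) + 1) ∣ (a - b + 1) := by
  have hp2 : (2 : ℤ) ≤ (p : ℤ) := by exact_mod_cast hp.two_le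
  -- from h1 + h2 : (p²-1) ∣ (p-1) * (r - a - b)
  have hsum := h1.add h2
  have hd1 : ((p : ℤ) ^ 2 - 1) ∣ ((p : ℤ) - 1) * (r - a - b) := by
    have h := Int.ModEq.dvd hsum
    have heq : a + 1 - (p : ℤ) * a + (b + (p : ℤ) * (1 - b))
        - (-((p : ℤ) * r) + ((p : ℤ) + 1 + r)) = ((p : ℤ) - 1) * (r - a - b) := by ring
    rw [heq] at h
    exact h
  have hfac : ((p : ℤ) ^ 2 - 1) = ((p : ℤ) - 1) * ((p : ℤ) + 1) := by ring
  have hd2 : ((p : ℤ) + 1) ∣ (r - a - b) := by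
    rw [hfac] at hd1
    have hne : ((p : ℤ) - 1) ≠ 0 := by omega
    exact (mul_dvd_mul_iff_left hne).mp hd1
  have hdvd : ((p : ℤ) + 1) ∣ ((p : ℤ) ^ 2 - 1) := ⟨(p : ℤ) - 1, by ring⟩
  have h2' : ((p : ℤ) + 1) ∣ (b + (p : ℤ) * (1 - b) - ((p : ℤ) + 1 + r)) :=
    dvd_trans hdvd (Int.ModEq.dvd h2)
  have hmain : ((p : ℤ) + 1) ∣ (a + (p : ℤ) * b + 1) := by
    have key : a + (p : ℤ) * b + 1
        = -((b + (p : ℤ) * (1 - b) - ((p : ℤ) + 1 + r)) + (r - a - b)) := by ring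
    rw [key]
    exact dvd_neg.mpr (dvd_add h2' hd2)
  refine ⟨hmain, ?_⟩
  have : a - b + 1 = (a + (p : ℤ) * b + 1) - ((p : ℤ) + 1) * b := by ring
  rw [this]
  exact dvd_sub hmain (Dvd.intro _ rfl)
end

section
/- Let p be a prime, n ≥ 0 an integer, and a, b ∈ ℤ with n < a − b + 1 < p − n. Then there is no integer r such that the pair (p + 1 + r, −p·r) agrees modulo p² − 1, in either order, with the pair (a + 1 − p·a, b + p(1 − b)); that is, neither [p + 1 + r ≡ a + 1 − p·a and −p·r ≡ b + p(1 − b) (mod p² − 1)] nor [p + 1 + r ≡ b + p(1 − b) and −p·r ≡ a + 1 − p·a (mod p² − 1)] can hold. -/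
/-- Let `p` be a prime, `n ≥ 0` an integer, and `a, b` integers with
`n < a − b + 1 < p − n`.  Then there is no integer `r` such that the pair
`(p + 1 + r, −p·r)` agrees modulo `p² − 1`, in either order, with the pair
`(a + 1 − p·a, b + p(1 − b))`.  (Combined arithmetic form of Lemma 5.4: an `n`-generic
non-supercuspidal `C`-parameter has trivial Weyl element.) -/
theorem generic_nonsupercuspidal_has_trivial_weyl_element (p : ℕ) (hp : p.Prime)
    (n : ℤ) (hn : 0 ≤ n) (a b : ℤ)
    (h1 : n < a - b + 1) (h2 : a - b + 1 < (p : ℤ) - n) :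
    ¬ ∃ r : ℤ,
      (((p : ℤ) + 1 + r ≡ a + 1 - (p : ℤ) * a [ZMOD (p : ℤ) ^ 2 - 1] ∧
        -((p : ℤ) * r) ≡ b + (p : ℤ) * (1 - b) [ZMOD (p : ℤ) ^ 2 - 1]) ∨
       ((p : ℤ) + 1 + r ≡ b + (p : ℤ) * (1 - b) [ZMOD (p : ℤ) ^ 2 - 1] ∧
        -((p : ℤ) * r) ≡ a + 1 - (p : ℤ) * a [ZMOD (p : ℤ) ^ 2 - 1])) := by
  have hp2 : (2 : ℤ) ≤ (p : ℤ) := by exact_mod_cast hp.two_le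
  rintro ⟨r, hcase⟩
  have key : ((p : ℤ) ^ 2 - 1) ∣ (a - b + 1) * ((p : ℤ) - 1) := by
    rcases hcase with ⟨hA, hB⟩ | ⟨hA, hB⟩
    · obtain ⟨x, hx⟩ := hA.dvd
      obtain ⟨y, hy⟩ := hB.dvd
      exact ⟨(p : ℤ) * x + y + (a + 1), by linear_combination (p : ℤ) * hx + hy⟩
    · obtain ⟨x, hx⟩ := hA.dvd
      obtain ⟨y, hy⟩ := hB.dvd
      exact ⟨x + (p : ℤ) * y - r + a, by linear_combination hx + (p : ℤ) * hy⟩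
  have hfac : (a - b + 1) * ((p : ℤ) - 1) = (((p : ℤ) - 1) * (a - b + 1)) := by ring
  have key2 : ((p : ℤ) + 1) ∣ (a - b + 1) := by
    have h := key
    rw [show ((p : ℤ) ^ 2 - 1) = ((p : ℤ) - 1) * ((p : ℤ) + 1) by ring, hfac] at h
    rcases h with ⟨c, hc⟩
    refine ⟨c, ?_⟩
    have hne : ((p : ℤ) - 1) ≠ 0 := by omega
    have := mul_left_cancel₀ hne (by linarith [hc] : ((p : ℤ) - 1) * (a - b + 1) = ((p : ℤ) - 1) * (((p : ℤ) + 1) * c))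
    linarith [this]
  have hle := Int.le_of_dvd (by omega) key2
  omega
end
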